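/- arXiv:2511.04364 — 2 statements merged into one kernel-verified Lean document; each statement's English description precedes it below -/
import Mathlib

section
/- For the ordered path P on vertex set {1,2,3,4} with edges {1,4},{2,3},{3,4}, the canonical (Erdős–Rado) Ramsey number satisfies ER(P) = 7. That is: every edge-coloring of the ordered complete graph K_7 contains a canonically colored copy of P, and there exists an edge-coloring of the ordered K_6 with no canonically colored copy of P. -/
/-- Given an ordered graph on `Fin m` whose edge list `E` consists of pairs `(a, b)` with
`a < b`, an order-preserving injection `f : Fin m → Fin n`, and an edge-coloring `χ` of the
ordered complete graph on `Fin n`, the copy of the graph given by `f` is *canonically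
colored* if it is monochromatic, rainbow, lower lexicographic (two edges of the copy get
the same color iff they have the same smaller endpoint), or upper lexicographic (two edges
of the copy get the same color iff they have the same larger endpoint). -/
def CanonicalCopy {m n : ℕ} (E : List (Fin m × Fin m)) (χ : Sym2 (Fin n) → ℕ)
    (f : Fin m → Fin n) : Prop :=
  (∀ e ∈ E, ∀ e' ∈ E, χ s(f e.1, f e.2) = χ s(f e'.1, f e'.2)) ∨
  (∀ e ∈ E, ∀ e' ∈ E, χ s(f e.1, f e.2) = χ s(f e'.1, f e'.2) → e = e') ∨
  (∀ e ∈ E, ∀ e' ∈ E, (χ s(f e.1, f e.2) = χ s(f e'.1, f e'.2) ↔ e.1 = e'.1)) ∨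
  (∀ e ∈ E, ∀ e' ∈ E, (χ s(f e.1, f e.2) = χ s(f e'.1, f e'.2) ↔ e.2 = e'.2))

/-- The edge-coloring `χ` of the ordered complete graph on `Fin n` contains a canonically
colored copy of the ordered graph on `Fin m` with edge list `E`: a copy is given by an
order-preserving (strictly monotone) injection `f : Fin m → Fin n`. -/
def HasCanonicalCopy {m : ℕ} (E : List (Fin m × Fin m)) (n : ℕ)
    (χ : Sym2 (Fin n) → ℕ) : Prop :=
  ∃ f : Fin m → Fin n, StrictMono f ∧ CanonicalCopy E χ f

/-- The edge list of the ordered graph (1-indexed in the paper; 0-indexed here). -/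
def pathEdges : List (Fin 4 × Fin 4) := [(0, 3), (1, 2), (2, 3)]


private def Q (x y z : ℕ) : Prop := (x = y ∧ y = z) ∨ (x ≠ y ∧ y ≠ z ∧ x ≠ z) ∨ (x = z ∧ x ≠ y)

private instance (x y z : ℕ) : Decidable (Q x y z) := by unfold Q; infer_instance

private lemma m1 : ((0 : Fin 4), (3 : Fin 4)) ∈ pathEdges := by simp [pathEdges]
private lemma m2 : ((1 : Fin 4), (2 : Fin 4)) ∈ pathEdges := by simp [pathEdges]
private lemma m3 : ((2 : Fin 4), (3 : Fin 4)) ∈ pathEdges := by simp [pathEdges]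

private lemma canon_of_Q {n : ℕ} {χ : Sym2 (Fin n) → ℕ} {f : Fin 4 → Fin n}
    (h : Q (χ s(f 0, f 3)) (χ s(f 1, f 2)) (χ s(f 2, f 3))) :
    CanonicalCopy pathEdges χ f := by
  set X := χ s(f 0, f 3) with hX
  set Y := χ s(f 1, f 2) with hY
  set Z := χ s(f 2, f 3) with hZ
  rcases h with ⟨h1, h2⟩ | ⟨h1, h2, h3⟩ | ⟨h1, h2⟩
  · left
    have h1' := h1.symm
    have h2' := h2.symm
    have h13 := h1.trans h2
    have h13' := h13.symm
    intro e he e' he'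
    fin_cases he <;> fin_cases he' <;>
      first | rfl | exact h1 | exact h1' | exact h2 | exact h2' | exact h13 | exact h13'
  · right; left
    have h1' : Y ≠ X := fun hh => h1 hh.symm
    have h2' : Z ≠ Y := fun hh => h2 hh.symm
    have h3' : Z ≠ X := fun hh => h3 hh.symm
    intro e he e' he'
    fin_cases he <;> fin_cases he' <;> intro hh <;>
      first | rfl | exact absurd hh h1 | exact absurd hh h2 | exact absurd hh h3
            | exact absurd hh h1' | exact absurd hh h2' | exact absurd hh h3'
  · right; right; right
    have h2' : Y ≠ X := fun hh => h2 hh.symm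
    have h3 : Y ≠ Z := fun hh => h2' (hh.trans h1.symm)
    have h3' : Z ≠ Y := fun hh => h3 hh.symm
    have h1' := h1.symm
    intro e he e' he'
    fin_cases he <;> fin_cases he' <;>
      first | exact iff_of_true rfl rfl | exact iff_of_true h1 rfl | exact iff_of_true h1' rfl
            | exact iff_of_false h2 (by decide) | exact iff_of_false h2' (by decide)
            | exact iff_of_false h3 (by decide) | exact iff_of_false h3' (by decide)

private lemma Q_of_canon {n : ℕ} {χ : Sym2 (Fin n) → ℕ} {f : Fin 4 → Fin n}
    (h : CanonicalCopy pathEdges χ f) :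
    Q (χ s(f 0, f 3)) (χ s(f 1, f 2)) (χ s(f 2, f 3)) := by
  rcases h with h | h | h | h
  · exact Or.inl ⟨h _ m1 _ m2, h _ m2 _ m3⟩
  · refine Or.inr (Or.inl ⟨fun he => ?_, fun he => ?_, fun he => ?_⟩)
    · simpa using h _ m1 _ m2 he
    · simpa using h _ m2 _ m3 he
    · simpa using h _ m1 _ m3 he
  · refine Or.inr (Or.inl ⟨fun he => ?_, fun he => ?_, fun he => ?_⟩)
    · simpa using (h _ m1 _ m2).mp he
    · simpa using (h _ m2 _ m3).mp he
    · simpa using (h _ m1 _ m3).mp he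
  · refine Or.inr (Or.inr ⟨(h _ m1 _ m3).mpr rfl, fun he => ?_⟩)
    · simpa using (h _ m1 _ m2).mp he

private lemma notQ {x y z : ℕ} (h : ¬ Q x y z) : (x = y ∧ y ≠ z) ∨ (y = z ∧ x ≠ y) := by
  unfold Q at h
  by_cases e1 : x = y <;> by_cases e2 : y = z <;> by_cases e3 : x = z <;> tauto

private lemma sm4 {n : ℕ} {a b c d : Fin n} (h1 : a < b) (h2 : b < c) (h3 : c < d) :
    StrictMono ![a, b, c, d] := by
  intro i j hij
  fin_cases i <;> fin_cases j <;>
    first | exact absurd hij (by decide) | exact h1 | exact h2 | exact h3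
          | exact h1.trans h2 | exact h2.trans h3 | exact h1.trans (h2.trans h3)

private def col6 (i j : Fin 6) : ℕ :=
  if min i j ≤ 1 then 0 else if min i j = 2 ∧ max i j = 5 then 2 else 1

private def chi6 : Sym2 (Fin 6) → ℕ :=
  Sym2.lift ⟨col6, by intro a b; simp [col6, min_comm, max_comm]⟩

private lemma chi6_key : ∀ a b c d : Fin 6, a < b → b < c → c < d →
    ¬ Q (chi6 s(a, d)) (chi6 s(b, c)) (chi6 s(c, d)) := by decide

private lemma core7 (x01 x02 x03 x04 x05 x06 x12 x13 x14 x15 x16 x23 x24 x25 x26 x34 x35 x36 x45 x46 x56 : ℕ)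
    (H0 : (x03 = x12 ∧ x12 ≠ x23) ∨ (x12 = x23 ∧ x03 ≠ x12))
    (H1 : (x04 = x12 ∧ x12 ≠ x24) ∨ (x12 = x24 ∧ x04 ≠ x12))
    (H2 : (x05 = x12 ∧ x12 ≠ x25) ∨ (x12 = x25 ∧ x05 ≠ x12))
    (H3 : (x06 = x12 ∧ x12 ≠ x26) ∨ (x12 = x26 ∧ x06 ≠ x12))
    (H4 : (x04 = x13 ∧ x13 ≠ x34) ∨ (x13 = x34 ∧ x04 ≠ x13))
    (H5 : (x05 = x13 ∧ x13 ≠ x35) ∨ (x13 = x35 ∧ x05 ≠ x13))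
    (H6 : (x06 = x13 ∧ x13 ≠ x36) ∨ (x13 = x36 ∧ x06 ≠ x13))
    (H7 : (x05 = x14 ∧ x14 ≠ x45) ∨ (x14 = x45 ∧ x05 ≠ x14))
    (H8 : (x06 = x14 ∧ x14 ≠ x46) ∨ (x14 = x46 ∧ x06 ≠ x14))
    (H9 : (x06 = x15 ∧ x15 ≠ x56) ∨ (x15 = x56 ∧ x06 ≠ x15))
    (H10 : (x04 = x23 ∧ x23 ≠ x34) ∨ (x23 = x34 ∧ x04 ≠ x23))
    (H11 : (x05 = x23 ∧ x23 ≠ x35) ∨ (x23 = x35 ∧ x05 ≠ x23))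
    (H12 : (x06 = x23 ∧ x23 ≠ x36) ∨ (x23 = x36 ∧ x06 ≠ x23))
    (H13 : (x05 = x24 ∧ x24 ≠ x45) ∨ (x24 = x45 ∧ x05 ≠ x24))
    (H14 : (x06 = x24 ∧ x24 ≠ x46) ∨ (x24 = x46 ∧ x06 ≠ x24))
    (H15 : (x06 = x25 ∧ x25 ≠ x56) ∨ (x25 = x56 ∧ x06 ≠ x25))
    (H16 : (x05 = x34 ∧ x34 ≠ x45) ∨ (x34 = x45 ∧ x05 ≠ x34))
    (H17 : (x06 = x34 ∧ x34 ≠ x46) ∨ (x34 = x46 ∧ x06 ≠ x34))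
    (H18 : (x06 = x35 ∧ x35 ≠ x56) ∨ (x35 = x56 ∧ x06 ≠ x35))
    (H19 : (x06 = x45 ∧ x45 ≠ x56) ∨ (x45 = x56 ∧ x06 ≠ x45))
    (H20 : (x14 = x23 ∧ x23 ≠ x34) ∨ (x23 = x34 ∧ x14 ≠ x23))
    (H21 : (x15 = x23 ∧ x23 ≠ x35) ∨ (x23 = x35 ∧ x15 ≠ x23))
    (H22 : (x16 = x23 ∧ x23 ≠ x36) ∨ (x23 = x36 ∧ x16 ≠ x23))
    (H23 : (x15 = x24 ∧ x24 ≠ x45) ∨ (x24 = x45 ∧ x15 ≠ x24))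
    (H24 : (x16 = x24 ∧ x24 ≠ x46) ∨ (x24 = x46 ∧ x16 ≠ x24))
    (H25 : (x16 = x25 ∧ x25 ≠ x56) ∨ (x25 = x56 ∧ x16 ≠ x25))
    (H26 : (x15 = x34 ∧ x34 ≠ x45) ∨ (x34 = x45 ∧ x15 ≠ x34))
    (H27 : (x16 = x34 ∧ x34 ≠ x46) ∨ (x34 = x46 ∧ x16 ≠ x34))
    (H28 : (x16 = x35 ∧ x35 ≠ x56) ∨ (x35 = x56 ∧ x16 ≠ x35))
    (H29 : (x16 = x45 ∧ x45 ≠ x56) ∨ (x45 = x56 ∧ x16 ≠ x45))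
    (H30 : (x25 = x34 ∧ x34 ≠ x45) ∨ (x34 = x45 ∧ x25 ≠ x34))
    (H31 : (x26 = x34 ∧ x34 ≠ x46) ∨ (x34 = x46 ∧ x26 ≠ x34))
    (H32 : (x26 = x35 ∧ x35 ≠ x56) ∨ (x35 = x56 ∧ x26 ≠ x35))
    (H33 : (x26 = x45 ∧ x45 ≠ x56) ∨ (x45 = x56 ∧ x26 ≠ x45))
    (H34 : (x36 = x45 ∧ x45 ≠ x56) ∨ (x45 = x56 ∧ x36 ≠ x45))
    : False := by
  have D0 : x03 ≠ x23 := H0.elim (fun p he => p.2 (p.1.symm.trans he)) (fun p he => p.2 (he.trans p.1.symm))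
  have D1 : x04 ≠ x24 := H1.elim (fun p he => p.2 (p.1.symm.trans he)) (fun p he => p.2 (he.trans p.1.symm))
  have D2 : x05 ≠ x25 := H2.elim (fun p he => p.2 (p.1.symm.trans he)) (fun p he => p.2 (he.trans p.1.symm))
  have D3 : x06 ≠ x26 := H3.elim (fun p he => p.2 (p.1.symm.trans he)) (fun p he => p.2 (he.trans p.1.symm))
  have D4 : x04 ≠ x34 := H4.elim (fun p he => p.2 (p.1.symm.trans he)) (fun p he => p.2 (he.trans p.1.symm))
  have D5 : x05 ≠ x35 := H5.elim (fun p he => p.2 (p.1.symm.trans he)) (fun p he => p.2 (he.trans p.1.symm))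
  have D6 : x06 ≠ x36 := H6.elim (fun p he => p.2 (p.1.symm.trans he)) (fun p he => p.2 (he.trans p.1.symm))
  have D7 : x05 ≠ x45 := H7.elim (fun p he => p.2 (p.1.symm.trans he)) (fun p he => p.2 (he.trans p.1.symm))
  have D8 : x06 ≠ x46 := H8.elim (fun p he => p.2 (p.1.symm.trans he)) (fun p he => p.2 (he.trans p.1.symm))
  have D9 : x06 ≠ x56 := H9.elim (fun p he => p.2 (p.1.symm.trans he)) (fun p he => p.2 (he.trans p.1.symm))
  have D10 : x04 ≠ x34 := H10.elim (fun p he => p.2 (p.1.symm.trans he)) (fun p he => p.2 (he.trans p.1.symm))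
  have D11 : x05 ≠ x35 := H11.elim (fun p he => p.2 (p.1.symm.trans he)) (fun p he => p.2 (he.trans p.1.symm))
  have D12 : x06 ≠ x36 := H12.elim (fun p he => p.2 (p.1.symm.trans he)) (fun p he => p.2 (he.trans p.1.symm))
  have D13 : x05 ≠ x45 := H13.elim (fun p he => p.2 (p.1.symm.trans he)) (fun p he => p.2 (he.trans p.1.symm))
  have D14 : x06 ≠ x46 := H14.elim (fun p he => p.2 (p.1.symm.trans he)) (fun p he => p.2 (he.trans p.1.symm))
  have D15 : x06 ≠ x56 := H15.elim (fun p he => p.2 (p.1.symm.trans he)) (fun p he => p.2 (he.trans p.1.symm))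
  have D16 : x05 ≠ x45 := H16.elim (fun p he => p.2 (p.1.symm.trans he)) (fun p he => p.2 (he.trans p.1.symm))
  have D17 : x06 ≠ x46 := H17.elim (fun p he => p.2 (p.1.symm.trans he)) (fun p he => p.2 (he.trans p.1.symm))
  have D18 : x06 ≠ x56 := H18.elim (fun p he => p.2 (p.1.symm.trans he)) (fun p he => p.2 (he.trans p.1.symm))
  have D19 : x06 ≠ x56 := H19.elim (fun p he => p.2 (p.1.symm.trans he)) (fun p he => p.2 (he.trans p.1.symm))
  have D20 : x14 ≠ x34 := H20.elim (fun p he => p.2 (p.1.symm.trans he)) (fun p he => p.2 (he.trans p.1.symm))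
  have D21 : x15 ≠ x35 := H21.elim (fun p he => p.2 (p.1.symm.trans he)) (fun p he => p.2 (he.trans p.1.symm))
  have D22 : x16 ≠ x36 := H22.elim (fun p he => p.2 (p.1.symm.trans he)) (fun p he => p.2 (he.trans p.1.symm))
  have D23 : x15 ≠ x45 := H23.elim (fun p he => p.2 (p.1.symm.trans he)) (fun p he => p.2 (he.trans p.1.symm))
  have D24 : x16 ≠ x46 := H24.elim (fun p he => p.2 (p.1.symm.trans he)) (fun p he => p.2 (he.trans p.1.symm))
  have D25 : x16 ≠ x56 := H25.elim (fun p he => p.2 (p.1.symm.trans he)) (fun p he => p.2 (he.trans p.1.symm))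
  have D26 : x15 ≠ x45 := H26.elim (fun p he => p.2 (p.1.symm.trans he)) (fun p he => p.2 (he.trans p.1.symm))
  have D27 : x16 ≠ x46 := H27.elim (fun p he => p.2 (p.1.symm.trans he)) (fun p he => p.2 (he.trans p.1.symm))
  have D28 : x16 ≠ x56 := H28.elim (fun p he => p.2 (p.1.symm.trans he)) (fun p he => p.2 (he.trans p.1.symm))
  have D29 : x16 ≠ x56 := H29.elim (fun p he => p.2 (p.1.symm.trans he)) (fun p he => p.2 (he.trans p.1.symm))
  have D30 : x25 ≠ x45 := H30.elim (fun p he => p.2 (p.1.symm.trans he)) (fun p he => p.2 (he.trans p.1.symm))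
  have D31 : x26 ≠ x46 := H31.elim (fun p he => p.2 (p.1.symm.trans he)) (fun p he => p.2 (he.trans p.1.symm))
  have D32 : x26 ≠ x56 := H32.elim (fun p he => p.2 (p.1.symm.trans he)) (fun p he => p.2 (he.trans p.1.symm))
  have D33 : x26 ≠ x56 := H33.elim (fun p he => p.2 (p.1.symm.trans he)) (fun p he => p.2 (he.trans p.1.symm))
  have D34 : x36 ≠ x56 := H34.elim (fun p he => p.2 (p.1.symm.trans he)) (fun p he => p.2 (he.trans p.1.symm))
  rcases H0 with ⟨h1, h1'⟩ | ⟨h1, h1'⟩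
  ·
    rcases H1 with ⟨h2, h2'⟩ | ⟨h2, h2'⟩
    ·
      rcases H10 with ⟨h3, h3'⟩ | ⟨h3, h3'⟩
      ·
        exact D0 ((h1.trans h2.symm).trans h3)
      ·
        rcases H2 with ⟨h4, h4'⟩ | ⟨h4, h4'⟩
        ·
          rcases H11 with ⟨h5, h5'⟩ | ⟨h5, h5'⟩
          ·
            exact D0 ((h1.trans h4.symm).trans h5)
          ·
            rcases H13 with ⟨h6, h6'⟩ | ⟨h6, h6'⟩
            ·
              exact D1 ((h2.trans h4.symm).trans h6)
            ·
              rcases H16 with ⟨h7, h7'⟩ | ⟨h7, h7'⟩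
              ·
                exact D0 (((h1.trans h4.symm).trans h7).trans h3.symm)
              ·
                rcases H7 with ⟨h8, h8'⟩ | ⟨h8, h8'⟩
                ·
                  rcases H3 with ⟨h9, h9'⟩ | ⟨h9, h9'⟩
                  ·
                    rcases H12 with ⟨h10, h10'⟩ | ⟨h10, h10'⟩
                    ·
                      exact D0 ((h1.trans h9.symm).trans h10)
                    ·
                      rcases H14 with ⟨h11, h11'⟩ | ⟨h11, h11'⟩
                      ·
                        exact D0 (((((h1.trans h9.symm).trans h11).trans h6).trans h7.symm).trans h3.symm)
                      ·
                        rcases H15 with ⟨h12, h12'⟩ | ⟨h12, h12'⟩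
                        ·
                          exact D2 ((h4.trans h9.symm).trans h12)
                        ·
                          rcases H18 with ⟨h13, h13'⟩ | ⟨h13, h13'⟩
                          ·
                            exact D0 (((h1.trans h9.symm).trans h13).trans h5.symm)
                          ·
                            exact D30 ((((h12.trans h13.symm).trans h5.symm).trans h3).trans h7)
                  ·
                    rcases H8 with ⟨h14, h14'⟩ | ⟨h14, h14'⟩
                    ·
                      exact D3 (((h14.trans h8.symm).trans h4).trans h9)
                    ·
                      exact D31 (((h9.symm.trans h4.symm).trans h8).trans h14)
                ·
                  exact D20 (h8.trans h7.symm)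
        ·
          rcases H30 with ⟨h15, h15'⟩ | ⟨h15, h15'⟩
          ·
            exact D0 (((h1.trans h4).trans h15).trans h3.symm)
          ·
            rcases H7 with ⟨h16, h16'⟩ | ⟨h16, h16'⟩
            ·
              rcases H11 with ⟨h17, h17'⟩ | ⟨h17, h17'⟩
              ·
                exact D7 ((h17.trans h3).trans h15)
              ·
                rcases H3 with ⟨h18, h18'⟩ | ⟨h18, h18'⟩
                ·
                  rcases H8 with ⟨h19, h19'⟩ | ⟨h19, h19'⟩
                  ·
                    exact D2 (((h16.trans h19.symm).trans h18).trans h4)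
                  ·
                    rcases H12 with ⟨h20, h20'⟩ | ⟨h20, h20'⟩
                    ·
                      exact D0 ((h1.trans h18.symm).trans h20)
                    ·
                      rcases H14 with ⟨h21, h21'⟩ | ⟨h21, h21'⟩
                      ·
                        exact D1 ((h2.trans h18.symm).trans h21)
                      ·
                        rcases H17 with ⟨h22, h22'⟩ | ⟨h22, h22'⟩
                        ·
                          exact D0 (((h1.trans h18.symm).trans h22).trans h3.symm)
                        ·
                          exact D5 ((((h16.trans h19).trans h22.symm).trans h3.symm).trans h17)
                ·
                  rcases H15 with ⟨h23, h23'⟩ | ⟨h23, h23'⟩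
                  ·
                    exact D3 ((h23.trans h4.symm).trans h18)
                  ·
                    exact D32 ((h18.symm.trans h4).trans h23)
            ·
              exact D20 (h16.trans h15.symm)
    ·
      rcases H2 with ⟨h24, h24'⟩ | ⟨h24, h24'⟩
      ·
        rcases H11 with ⟨h25, h25'⟩ | ⟨h25, h25'⟩
        ·
          exact D0 ((h1.trans h24.symm).trans h25)
        ·
          rcases H23 with ⟨h26, h26'⟩ | ⟨h26, h26'⟩
          ·
            rcases H3 with ⟨h27, h27'⟩ | ⟨h27, h27'⟩
            ·
              rcases H12 with ⟨h28, h28'⟩ | ⟨h28, h28'⟩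
              ·
                exact D0 ((h1.trans h27.symm).trans h28)
              ·
                rcases H15 with ⟨h29, h29'⟩ | ⟨h29, h29'⟩
                ·
                  exact D2 ((h24.trans h27.symm).trans h29)
                ·
                  rcases H18 with ⟨h30, h30'⟩ | ⟨h30, h30'⟩
                  ·
                    exact D0 (((h1.trans h27.symm).trans h30).trans h25.symm)
                  ·
                    exact D34 ((h28.symm.trans h25).trans h30)
            ·
              rcases H9 with ⟨h31, h31'⟩ | ⟨h31, h31'⟩
              ·
                exact D3 (((h31.trans h26).trans h2.symm).trans h27)
              ·
                exact D32 (((h27.symm.trans h2).trans h26.symm).trans h31)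
          ·
            exact D7 ((h24.trans h2).trans h26)
      ·
        rcases H13 with ⟨h32, h32'⟩ | ⟨h32, h32'⟩
        ·
          exact D2 ((h32.trans h2.symm).trans h24)
        ·
          exact D30 ((h24.symm.trans h2).trans h32)
  ·
    rcases H1 with ⟨h33, h33'⟩ | ⟨h33, h33'⟩
    ·
      rcases H20 with ⟨h34, h34'⟩ | ⟨h34, h34'⟩
      ·
        rcases H2 with ⟨h35, h35'⟩ | ⟨h35, h35'⟩
        ·
          rcases H13 with ⟨h36, h36'⟩ | ⟨h36, h36'⟩
          ·
            exact D1 ((h33.trans h35.symm).trans h36)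
          ·
            rcases H16 with ⟨h37, h37'⟩ | ⟨h37, h37'⟩
            ·
              exact D4 ((h33.trans h35.symm).trans h37)
            ·
              rcases H21 with ⟨h38, h38'⟩ | ⟨h38, h38'⟩
              ·
                rcases H3 with ⟨h39, h39'⟩ | ⟨h39, h39'⟩
                ·
                  rcases H14 with ⟨h40, h40'⟩ | ⟨h40, h40'⟩
                  ·
                    exact D1 ((h33.trans h39.symm).trans h40)
                  ·
                    rcases H15 with ⟨h41, h41'⟩ | ⟨h41, h41'⟩
                    ·
                      exact D2 ((h35.trans h39.symm).trans h41)
                    ·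
                      rcases H18 with ⟨h42, h42'⟩ | ⟨h42, h42'⟩
                      ·
                        exact D5 ((h35.trans h39.symm).trans h42)
                      ·
                        rcases H19 with ⟨h43, h43'⟩ | ⟨h43, h43'⟩
                        ·
                          exact D1 (((h33.trans h39.symm).trans h43).trans h36.symm)
                        ·
                          exact D30 (h41.trans h43.symm)
                ·
                  rcases H8 with ⟨h44, h44'⟩ | ⟨h44, h44'⟩
                  ·
                    exact D3 (((h44.trans h34).trans h1.symm).trans h39)
                  ·
                    exact D31 (((h39.symm.trans h1).trans h34.symm).trans h44)
              ·
                exact D5 ((h35.trans h1).trans h38)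
        ·
          rcases H7 with ⟨h45, h45'⟩ | ⟨h45, h45'⟩
          ·
            exact D2 (((h45.trans h34).trans h1.symm).trans h35)
          ·
            exact D30 (((h35.symm.trans h1).trans h34.symm).trans h45)
      ·
        exact D4 ((h33.trans h1).trans h34)
    ·
      rcases H10 with ⟨h46, h46'⟩ | ⟨h46, h46'⟩
      ·
        exact D1 ((h46.trans h1.symm).trans h33)
      ·
        rcases H2 with ⟨h47, h47'⟩ | ⟨h47, h47'⟩
        ·
          rcases H7 with ⟨h48, h48'⟩ | ⟨h48, h48'⟩
          ·
            exact D20 (((h48.symm.trans h47).trans h1).trans h46)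
          ·
            rcases H21 with ⟨h49, h49'⟩ | ⟨h49, h49'⟩
            ·
              rcases H30 with ⟨h50, h50'⟩ | ⟨h50, h50'⟩
              ·
                exact D2 (((h47.trans h1).trans h46).trans h50.symm)
              ·
                exact D7 (((h47.trans h1).trans h46).trans h50)
            ·
              exact D5 ((h47.trans h1).trans h49)
        ·
          rcases H11 with ⟨h51, h51'⟩ | ⟨h51, h51'⟩
          ·
            exact D2 ((h51.trans h1.symm).trans h47)
          ·
            rcases H13 with ⟨h52, h52'⟩ | ⟨h52, h52'⟩
            ·
              exact D2 ((h52.trans h33.symm).trans h47)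
            ·
              exact D30 ((h47.symm.trans h33).trans h52)

/-- ER(pathEdges) = 7. -/
theorem ER_P4_1423 :
    (∀ χ : Sym2 (Fin 7) → ℕ, HasCanonicalCopy pathEdges 7 χ) ∧
    (∃ χ : Sym2 (Fin 6) → ℕ, ¬ HasCanonicalCopy pathEdges 6 χ) := by
  constructor
  · intro χ
    by_contra hn
    have H : ∀ a b c d : Fin 7, a < b → b < c → c < d →
        (χ s(a, d) = χ s(b, c) ∧ χ s(b, c) ≠ χ s(c, d)) ∨
        (χ s(b, c) = χ s(c, d) ∧ χ s(a, d) ≠ χ s(b, c)) := by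
      intro a b c d hab hbc hcd
      refine notQ (fun hq => hn ⟨![a, b, c, d], sm4 hab hbc hcd, canon_of_Q hq⟩)
    exact core7 (χ s(0, 1)) (χ s(0, 2)) (χ s(0, 3)) (χ s(0, 4)) (χ s(0, 5)) (χ s(0, 6)) (χ s(1, 2)) (χ s(1, 3)) (χ s(1, 4)) (χ s(1, 5)) (χ s(1, 6)) (χ s(2, 3)) (χ s(2, 4)) (χ s(2, 5)) (χ s(2, 6)) (χ s(3, 4)) (χ s(3, 5)) (χ s(3, 6)) (χ s(4, 5)) (χ s(4, 6)) (χ s(5, 6))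
      (H 0 1 2 3 (by decide) (by decide) (by decide))
      (H 0 1 2 4 (by decide) (by decide) (by decide))
      (H 0 1 2 5 (by decide) (by decide) (by decide))
      (H 0 1 2 6 (by decide) (by decide) (by decide))
      (H 0 1 3 4 (by decide) (by decide) (by decide))
      (H 0 1 3 5 (by decide) (by decide) (by decide))
      (H 0 1 3 6 (by decide) (by decide) (by decide))
      (H 0 1 4 5 (by decide) (by decide) (by decide))
      (H 0 1 4 6 (by decide) (by decide) (by decide))
      (H 0 1 5 6 (by decide) (by decide) (by decide))
      (H 0 2 3 4 (by decide) (by decide) (by decide))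
      (H 0 2 3 5 (by decide) (by decide) (by decide))
      (H 0 2 3 6 (by decide) (by decide) (by decide))
      (H 0 2 4 5 (by decide) (by decide) (by decide))
      (H 0 2 4 6 (by decide) (by decide) (by decide))
      (H 0 2 5 6 (by decide) (by decide) (by decide))
      (H 0 3 4 5 (by decide) (by decide) (by decide))
      (H 0 3 4 6 (by decide) (by decide) (by decide))
      (H 0 3 5 6 (by decide) (by decide) (by decide))
      (H 0 4 5 6 (by decide) (by decide) (by decide))
      (H 1 2 3 4 (by decide) (by decide) (by decide))
      (H 1 2 3 5 (by decide) (by decide) (by decide))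
      (H 1 2 3 6 (by decide) (by decide) (by decide))
      (H 1 2 4 5 (by decide) (by decide) (by decide))
      (H 1 2 4 6 (by decide) (by decide) (by decide))
      (H 1 2 5 6 (by decide) (by decide) (by decide))
      (H 1 3 4 5 (by decide) (by decide) (by decide))
      (H 1 3 4 6 (by decide) (by decide) (by decide))
      (H 1 3 5 6 (by decide) (by decide) (by decide))
      (H 1 4 5 6 (by decide) (by decide) (by decide))
      (H 2 3 4 5 (by decide) (by decide) (by decide))
      (H 2 3 4 6 (by decide) (by decide) (by decide))
      (H 2 3 5 6 (by decide) (by decide) (by decide))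
      (H 2 4 5 6 (by decide) (by decide) (by decide))
      (H 3 4 5 6 (by decide) (by decide) (by decide))
  · refine ⟨chi6, fun hc => ?_⟩
    obtain ⟨f, hf, hc⟩ := hc
    exact chi6_key (f 0) (f 1) (f 2) (f 3)
      (hf (by decide)) (hf (by decide)) (hf (by decide)) (Q_of_canon hc)
end

section
/- An edge-coloring of the cycle graph C_n (n ≥ 3) is orderable if and only if there exists a vertex of the cycle whose two incident edges receive the same color. -/
/-- A coloring `c` of the edges of the graph on `Fin m` with adjacency relation `Adj` is
*orderable* if there is a linear ordering of the vertices (given by the ranking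
permutation `π`) such that the color of every edge is determined by its `π`-smaller
endpoint: if `i` precedes both `j` and `k`, then the edges `ij` and `ik` get the same color. -/
def OrderableColoring {m : ℕ} (Adj : Fin m → Fin m → Prop) (c : Fin m → Fin m → ℕ) : Prop :=
  ∃ π : Equiv.Perm (Fin m),
    ∀ i j k : Fin m, Adj i j → Adj i k → π i < π j → π i < π k → c i j = c i k

/-- The adjacency relation of the cycle `Cₘ` on `Fin m`: vertices `i` and `j` are adjacent
iff one is the (cyclic) successor of the other. -/
def CycleAdj (m : ℕ) [NeZero m] : Fin m → Fin m → Prop := fun i j => j = i + 1 ∨ i = j + 1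

private lemma fin_sub_one_lt (k : ℕ) (a : Fin (k + 3)) (h : a ≠ 0) : a - 1 < a := by
  have h' : a.val ≠ 0 := fun hh => h (Fin.ext hh)
  rw [Fin.lt_iff_val_lt_val, Fin.coe_sub_one, if_neg h]
  omega

private lemma fin_one_ne_zero (k : ℕ) : (1 : Fin (k + 3)) ≠ 0 := by
  intro h
  have := congrArg Fin.val h
  simp [Fin.val_one] at this

/-- An edge-coloring of the cycle `C_n` (`n ≥ 3`, here `n = k + 3`) is orderable if and
only if some vertex of the cycle has its two incident edges colored the same. -/
theorem orderable_cycle_iff (k : ℕ) (χ : Sym2 (Fin (k + 3)) → ℕ) :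
    OrderableColoring (CycleAdj (k + 3)) (fun i j => χ s(i, j)) ↔
    ∃ v : Fin (k + 3), χ s(v, v + 1) = χ s(v, v - 1) := by
  constructor
  · rintro ⟨π, hπ⟩
    set v := π.symm 0 with hv
    refine ⟨v, ?_⟩
    have h0 : π v = 0 := π.apply_symm_apply 0
    have hne : ∀ j : Fin (k + 3), j ≠ v → π v < π j := by
      intro j hj
      rw [h0]
      refine Fin.pos_iff_ne_zero.mpr fun h => hj ?_
      have := congrArg π.symm h
      simpa [hv] using this
    have hadd : v + 1 ≠ v := by
      intro h
      have h2 : v + 1 - v = v - v := congrArg (· - v) h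
      rw [add_sub_cancel_left, sub_self] at h2
      exact fin_one_ne_zero k h2
    have hsub : v - 1 ≠ v := by
      intro h
      exact fin_one_ne_zero k (sub_eq_self.mp h)
    exact hπ v (v + 1) (v - 1) (Or.inl rfl) (Or.inr (sub_add_cancel v 1).symm)
      (hne _ hadd) (hne _ hsub)
  · rintro ⟨v, hv⟩
    refine ⟨Equiv.subRight v, ?_⟩
    intro i j k hij hik hlt1 hlt2
    have hmin : ∀ x : Fin (k + 3), (Equiv.subRight v) i < (Equiv.subRight v) (i - 1) → i = v := by
      intro x h
      by_contra hne
      have hz : i - v ≠ 0 := sub_ne_zero.mpr hne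
      have : i - 1 - v = i - v - 1 := sub_right_comm i 1 v
      have hlt : (Equiv.subRight v) (i - 1) < (Equiv.subRight v) i := by
        simpa [Equiv.subRight_apply, this] using fin_sub_one_lt _ (i - v) hz
      exact absurd h (not_lt.mpr (le_of_lt hlt))
    have hj' : j = i + 1 ∨ j = i - 1 := by
      rcases hij with h | h
      · exact Or.inl h
      · exact Or.inr (by rw [h]; simp)
    have hk' : k = i + 1 ∨ k = i - 1 := by
      rcases hik with h | h
      · exact Or.inl h
      · exact Or.inr (by rw [h]; simp)
    rcases hj' with hj' | hj' <;> rcases hk' with hk' | hk' <;> subst hj' <;> subst hk'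
    · rfl
    · have hiv : i = v := hmin ⟨0, Nat.succ_pos _⟩ hlt2
      subst hiv
      exact hv
    · have hiv : i = v := hmin ⟨0, Nat.succ_pos _⟩ hlt1
      subst hiv
      exact hv.symm
    · rfl
end
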